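/- Suppose f: ℕ → ℝ satisfies the gapped sub-additivity f(i+g+j) ≤ c_g(i,j) + f(i) + f(j) for all positive integers i, j (with fixed gap g ≥ 0), where c_g(i,j) ≤ K(i+j)/[log(i+j)]^{1+ε} for constants K > 0 and ε > 0. Then lim_{n→∞} f(n)/n exists (possibly −∞), i.e., liminf f(n)/n = limsup f(n)/n. -/

import Mathlib

open Filter

lemma core_ineq {x c e : ℝ} (hx : 0 < x) (hc : 0 < c) (he : 0 < e) :
    e * c / (x + c) ^ (1 + e) ≤ 1 / x ^ e - 1 / (x + c) ^ e := by
  set y := x + c with hy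
  have hy0 : 0 < y := by positivity
  have ha : (0:ℝ) < x ^ e := Real.rpow_pos_of_pos hx e
  have hb : (0:ℝ) < y ^ e := Real.rpow_pos_of_pos hy0 e
  have hlog : 1 - x / y ≤ Real.log (y / x) := by
    have h := Real.log_le_sub_one_of_pos (show 0 < x / y by positivity)
    rw [Real.log_div hx.ne' hy0.ne'] at h
    rw [Real.log_div hy0.ne' hx.ne']
    have hxy : x / y < 1 := (div_lt_one hy0).2 (by linarith)
    linarith
  have hexp : 1 + e * (c / y) ≤ (y / x) ^ e := by
    have h1 : 1 - x / y = c / y := by field_simp; rw [hy]; ring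
    have h2 : e * Real.log (y / x) + 1 ≤ Real.exp (e * Real.log (y / x)) :=
      Real.add_one_le_exp _
    have h3 : (y / x) ^ e = Real.exp (Real.log (y / x) * e) :=
      Real.rpow_def_of_pos (by positivity) e
    have h4 : e * (c / y) ≤ e * Real.log (y / x) := by
      rw [← h1]; exact mul_le_mul_of_nonneg_left hlog he.le
    rw [h3, mul_comm (Real.log (y/x)) e]
    linarith
  have hdr : (y / x) ^ e = y ^ e / x ^ e := Real.div_rpow hy0.le hx.le e
  have h2 : x ^ e * (y + e * c) ≤ y ^ e * y := by
    have h5 : (y + e * c) / y ≤ y ^ e / x ^ e := by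
      rw [← hdr]
      have : (y + e * c) / y = 1 + e * (c / y) := by field_simp
      rw [this]; exact hexp
    have := (div_le_div_iff₀ hy0 ha).1 h5
    linarith
  have hye : y ^ (1 + e) = y * y ^ e := by
    rw [Real.rpow_add hy0, Real.rpow_one]
  rw [hye, div_sub_div 1 1 ha.ne' hb.ne', one_mul, mul_one,
    div_le_div_iff₀ (by positivity) (by positivity)]
  nlinarith [mul_nonneg hb.le (sub_nonneg.2 h2)]

lemma telescope_sum {lm L2 e : ℝ} (hlm : 0 < lm) (hL2 : 0 < L2) (he : 0 < e) (k : ℕ) :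
    ∑ j ∈ Finset.range k, 1 / (lm + ((j:ℝ)+1) * L2) ^ (1+e) ≤ 1 / (e * L2 * lm ^ e) := by
  set A : ℕ → ℝ := fun j => 1 / (lm + (j:ℝ) * L2) ^ e with hA
  have key : ∀ j : ℕ, 1 / (lm + ((j:ℝ)+1) * L2) ^ (1+e) ≤ (A j - A (j+1)) / (e * L2) := by
    intro j
    have hx : 0 < lm + (j:ℝ) * L2 := by positivity
    have h := core_ineq hx hL2 he
    have harg : lm + (j:ℝ) * L2 + L2 = lm + ((j:ℝ)+1) * L2 := by ring
    rw [harg] at h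
    rw [le_div_iff₀ (by positivity : (0:ℝ) < e * L2)]
    have hAj : A j - A (j+1) = 1 / (lm + (j:ℝ)*L2) ^ e - 1 / (lm + ((j:ℝ)+1)*L2) ^ e := by
      simp only [hA]; push_cast; ring_nf
    rw [hAj]
    calc 1 / (lm + ((j:ℝ)+1) * L2) ^ (1+e) * (e * L2)
        = e * L2 / (lm + ((j:ℝ)+1) * L2) ^ (1+e) := by ring
      _ ≤ _ := h
  calc ∑ j ∈ Finset.range k, 1 / (lm + ((j:ℝ)+1) * L2) ^ (1+e)
      ≤ ∑ j ∈ Finset.range k, (A j - A (j+1)) / (e * L2) :=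
        Finset.sum_le_sum fun j _ => key j
    _ = (∑ j ∈ Finset.range k, (A j - A (j+1))) / (e * L2) := by
        rw [Finset.sum_div]
    _ = (A 0 - A k) / (e * L2) := by rw [Finset.sum_range_sub' A k]
    _ ≤ A 0 / (e * L2) := by
        have hAk : 0 ≤ A k := by
          simp only [hA]; positivity
        gcongr
        linarith
    _ = 1 / (e * L2 * lm ^ e) := by
        simp only [hA, Nat.cast_zero, zero_mul, add_zero]
        rw [div_div]
        ring_nf

def towerN (m g k : ℕ) : ℕ := 2 ^ k * (m + g) - g

noncomputable def E0 (K e : ℝ) (m g : ℕ) : ℝ :=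
  K * ((m : ℝ) + g) / (e * Real.log 2 * Real.log m ^ e)

noncomputable def vV (t K e : ℝ) (m g : ℕ) : ℝ :=
  (t * m + E0 K e m g) / ((m : ℝ) + g)

noncomputable def wW (t K e : ℝ) (m g : ℕ) : ℝ :=
  2 * (g : ℝ) * |vV t K e m g| / (m : ℝ) + K / Real.log m ^ (1 + e)

lemma log_ge_one {m : ℕ} (hm3 : 3 ≤ m) : 1 ≤ Real.log m := by
  have h3 : (3:ℝ) ≤ (m:ℝ) := by exact_mod_cast hm3
  have he : Real.exp 1 ≤ (m:ℝ) := by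
    have := Real.exp_one_lt_d9
    linarith
  calc (1:ℝ) = Real.log (Real.exp 1) := (Real.log_exp 1).symm
    _ ≤ Real.log m := Real.log_le_log (Real.exp_pos 1) he

set_option maxHeartbeats 2000000 in
lemma key_fixed_m (f : ℕ → ℝ) (c : ℕ → ℕ → ℝ) (g : ℕ) (K ε : ℝ)
    (hK : 0 < K) (hε : 0 < ε)
    (hsub : ∀ i j : ℕ, 0 < i → 0 < j → f (i + g + j) ≤ c i j + f i + f j)
    (hc : ∀ i j : ℕ, 0 < i → 0 < j →
      c i j ≤ K * ((i : ℝ) + j) / Real.log ((i : ℝ) + j) ^ ((1 : ℝ) + ε))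
    (t : ℝ) (m : ℕ) (hm3 : 3 ≤ m) (hfm : f m ≤ t * m) :
    ∃ B : ℝ, ∀ n : ℕ, 1 ≤ n → f n ≤ (vV t K ε m g + 2 * wW t K ε m g) * n + B := by
  have hm0 : 0 < m := by omega
  have hm0R : (0:ℝ) < m := by exact_mod_cast hm0
  have hmgR : (0:ℝ) < (m:ℝ) + g := by positivity
  have hlm1 : 1 ≤ Real.log m := log_ge_one hm3
  have hlm0 : 0 < Real.log m := by linarith
  set lm := Real.log m with hlmdef
  set L2 := Real.log 2 with hL2def
  have hL2 : 0 < L2 := Real.log_pos one_lt_two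
  -- tower facts
  have h2g : ∀ k, g ≤ 2 ^ k * (m + g) := by
    intro k
    calc g ≤ m + g := by omega
      _ ≤ 2 ^ k * (m + g) := Nat.le_mul_of_pos_left _ (Nat.pow_pos (by norm_num))
  have hNm : ∀ k, m ≤ towerN m g k := by
    intro k
    have h1 : m + g ≤ 2 ^ k * (m + g) := Nat.le_mul_of_pos_left _ (Nat.pow_pos (by norm_num))
    simp only [towerN]; omega
  have hNpos : ∀ k, 0 < towerN m g k := fun k => lt_of_lt_of_le hm0 (hNm k)
  have hNrec : ∀ k, towerN m g (k+1) = towerN m g k + g + towerN m g k := by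
    intro k
    have h1 := h2g k
    have h2 : 2 ^ (k+1) * (m + g) = 2 * (2 ^ k * (m + g)) := by ring
    simp only [towerN]; omega
  have hNcast : ∀ k, (towerN m g k : ℝ) = 2 ^ k * ((m:ℝ) + g) - g := by
    intro k
    simp only [towerN]
    rw [Nat.cast_sub (h2g k)]
    push_cast; ring
  have hN2 : ∀ k, 2 ^ k * m ≤ towerN m g k := by
    intro k
    have h1 : g ≤ 2 ^ k * g := Nat.le_mul_of_pos_left _ (Nat.pow_pos (by norm_num))
    have h2 : 2 ^ k * (m + g) = 2 ^ k * m + 2 ^ k * g := by ring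
    simp only [towerN]; omega
  -- the partial cost sums
  set S : ℕ → ℝ := fun k => ∑ j ∈ Finset.range k,
      c (towerN m g j) (towerN m g j) / 2 ^ (j+1) with hSdef
  have htower : ∀ k, f (towerN m g k) ≤ 2 ^ k * (f m + S k) := by
    intro k
    induction k with
    | zero =>
      have h0 : towerN m g 0 = m := by simp [towerN]
      simp [h0, hSdef]
    | succ k IH =>
      have hstep := hsub (towerN m g k) (towerN m g k) (hNpos k) (hNpos k)
      rw [← hNrec k] at hstep
      have hSsucc : S (k+1) = S k + c (towerN m g k) (towerN m g k) / 2 ^ (k+1) := by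
        simp only [hSdef, Finset.sum_range_succ]
      have hpow : (2:ℝ) ^ (k+1) * (f m + (S k + c (towerN m g k) (towerN m g k) / 2 ^ (k+1)))
          = 2 * (2 ^ k * (f m + S k)) + c (towerN m g k) (towerN m g k) := by
        have h2 : ((2:ℝ) ^ (k+1)) ≠ 0 := by positivity
        field_simp
        ring
      rw [hSsucc, hpow]
      linarith
  -- bound on the cost sums
  have hSle : ∀ k, S k ≤ E0 K ε m g := by
    intro k
    have hterm : ∀ j : ℕ, c (towerN m g j) (towerN m g j) / 2 ^ (j+1)
        ≤ K * ((m:ℝ) + g) * (1 / (lm + ((j:ℝ)+1) * L2) ^ (1+ε)) := by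
      intro j
      have hcj := hc (towerN m g j) (towerN m g j) (hNpos j) (hNpos j)
      have hTpos : (0:ℝ) < (towerN m g j : ℝ) := by exact_mod_cast hNpos j
      have hlow : (2:ℝ) ^ (j+1) * m ≤ (towerN m g j : ℝ) + (towerN m g j : ℝ) := by
        have hc1 : ((2 ^ j * m : ℕ) : ℝ) ≤ (towerN m g j : ℝ) := by exact_mod_cast hN2 j
        push_cast at hc1
        have h2 : (2:ℝ) ^ (j+1) * (m:ℝ) = 2^j*(m:ℝ) + 2^j*(m:ℝ) := by ring
        linarith
      have hhigh : (towerN m g j : ℝ) + (towerN m g j : ℝ) ≤ (2:ℝ) ^ (j+1) * ((m:ℝ) + g) := by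
        rw [hNcast j]
        have hg0 : ((0:ℝ)) ≤ g := by positivity
        have h2 : (2:ℝ)^(j+1)*((m:ℝ)+g) = 2^j*((m:ℝ)+g) + 2^j*((m:ℝ)+g) := by ring
        linarith
      have hlog : lm + ((j:ℝ)+1) * L2 ≤ Real.log ((towerN m g j : ℝ) + (towerN m g j : ℝ)) := by
        have h1 : Real.log ((2:ℝ) ^ (j+1) * m) ≤ Real.log ((towerN m g j : ℝ) + (towerN m g j : ℝ)) :=
          Real.log_le_log (by positivity) hlow
        have h2 : Real.log ((2:ℝ) ^ (j+1) * m) = ((j:ℝ)+1) * L2 + lm := by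
          rw [Real.log_mul (by positivity) (by positivity), Real.log_pow]
          push_cast
          ring
        linarith
      have hden : (0:ℝ) < (lm + ((j:ℝ)+1) * L2) ^ (1+ε) := by
        apply Real.rpow_pos_of_pos; positivity
      have hstep2 : K * ((towerN m g j : ℝ) + (towerN m g j : ℝ)) / Real.log ((towerN m g j : ℝ) + (towerN m g j : ℝ)) ^ ((1:ℝ)+ε)
          ≤ K * ((2:ℝ)^(j+1) * ((m:ℝ)+g)) / (lm + ((j:ℝ)+1) * L2) ^ (1+ε) := by
        apply div_le_div₀ (by positivity) (by nlinarith [hhigh, hK.le]) hden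
        apply Real.rpow_le_rpow (by positivity) hlog (by linarith)
      have hfin : c (towerN m g j) (towerN m g j)
          ≤ K * ((2:ℝ)^(j+1) * ((m:ℝ)+g)) / (lm + ((j:ℝ)+1) * L2) ^ (1+ε) :=
        le_trans hcj hstep2
      rw [div_le_iff₀ (by positivity : (0:ℝ) < 2 ^ (j+1))]
      calc c (towerN m g j) (towerN m g j)
          ≤ K * ((2:ℝ)^(j+1) * ((m:ℝ)+g)) / (lm + ((j:ℝ)+1) * L2) ^ (1+ε) := hfin
        _ = K * ((m:ℝ) + g) * (1 / (lm + ((j:ℝ)+1) * L2) ^ (1+ε)) * 2 ^ (j+1) := by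
            field_simp
    calc S k ≤ ∑ j ∈ Finset.range k, K * ((m:ℝ) + g) * (1 / (lm + ((j:ℝ)+1) * L2) ^ (1+ε)) :=
          Finset.sum_le_sum fun j _ => hterm j
      _ = K * ((m:ℝ) + g) * ∑ j ∈ Finset.range k, 1 / (lm + ((j:ℝ)+1) * L2) ^ (1+ε) := by
          rw [Finset.mul_sum]
      _ ≤ K * ((m:ℝ) + g) * (1 / (ε * L2 * lm ^ ε)) := by
          apply mul_le_mul_of_nonneg_left (telescope_sum hlm0 hL2 hε k) (by positivity)
      _ = E0 K ε m g := by
          simp only [E0]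
          field_simp
          rw [← hlmdef, ← hL2def, mul_div_assoc, div_self (Real.rpow_pos_of_pos hlm0 ε).ne', mul_one]
  -- linear bound along the tower
  set v : ℝ := vV t K ε m g with hvdef
  have hvk : ∀ k, f (towerN m g k) ≤ v * towerN m g k + g * |v| := by
    intro k
    have h1 : f (towerN m g k) ≤ 2 ^ k * (t * m + E0 K ε m g) := by
      have h2 : f m + S k ≤ t * m + E0 K ε m g := by
        have := hSle k
        linarith
      calc f (towerN m g k) ≤ 2 ^ k * (f m + S k) := htower k
        _ ≤ 2 ^ k * (t * m + E0 K ε m g) :=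
            mul_le_mul_of_nonneg_left h2 (by positivity)
    have h3 : (2:ℝ) ^ k * (t * m + E0 K ε m g) = v * (towerN m g k) + v * g := by
      rw [hvdef]
      simp only [vV]
      rw [hNcast k]
      field_simp
      ring
    have h4 : v * (g:ℝ) ≤ |v| * g :=
      mul_le_mul_of_nonneg_right (le_abs_self v) (by positivity)
    rw [h3] at h1
    linarith
  -- base constant
  have hne : (Finset.Icc 1 (m+g)).Nonempty := ⟨1, Finset.mem_Icc.2 ⟨le_refl 1, by omega⟩⟩
  set B : ℝ := (Finset.Icc 1 (m+g)).sup' hne (fun s => f s - v * s) with hBdef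
  have hB : ∀ s : ℕ, 1 ≤ s → s ≤ m + g → f s ≤ v * s + B := by
    intro s h1 h2
    have := Finset.le_sup' (fun s : ℕ => f s - v * s) (Finset.mem_Icc.2 ⟨h1, h2⟩)
    rw [hBdef]
    linarith
  set W : ℝ := wW t K ε m g with hWdef
  have hlmp : (0:ℝ) < lm ^ ((1:ℝ) + ε) := Real.rpow_pos_of_pos hlm0 _
  have hW0 : 0 ≤ W := by
    rw [hWdef]; simp only [wW, ← hlmdef]
    positivity
  have hWeq : W = 2 * (g:ℝ) * |v| / m + K / lm ^ (1+ε) := by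
    rw [hWdef, hvdef]; simp only [wW, ← hlmdef]
  refine ⟨B, ?_⟩
  have hmain : ∀ n : ℕ, 1 ≤ n → f n ≤ v * n + B + 2 * W * n := by
    intro n
    induction n using Nat.strong_induction_on with
    | _ n IH =>
      intro hn1
      by_cases hsmall : n ≤ m + g
      · have h1 := hB n hn1 hsmall
        have h2 : (0:ℝ) ≤ 2 * W * n := by positivity
        linarith
      · have hn : m + g + 1 ≤ n := by omega
        set P : ℕ → Prop := fun k => towerN m g k + g + 1 ≤ n with hPdef
        have hP0 : P 0 := by
          simp only [hPdef, towerN, pow_zero, one_mul]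
          omega
        set k : ℕ := Nat.findGreatest P n with hkdef
        have hPk : P k := Nat.findGreatest_spec (Nat.zero_le n) hP0
        have hkn : k + 1 ≤ n := by
          have h1 : k < 2 ^ k := Nat.lt_two_pow_self
          have h2 : 2 ^ k ≤ 2 ^ k * m := Nat.le_mul_of_pos_right _ hm0
          have h3 := hN2 k
          have h4 : towerN m g k + g + 1 ≤ n := hPk
          omega
        have hnotP : ¬ P (k+1) := Nat.findGreatest_is_greatest (Nat.lt_succ_self k) hkn
        have hup : n ≤ 2 * towerN m g k + 2 * g := by
          have h1 : ¬ (towerN m g (k+1) + g + 1 ≤ n) := hnotP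
          have h2 := hNrec k
          omega
        set T : ℕ := towerN m g k with hTdef
        have hTm : m ≤ T := hNm k
        have hTpos : 0 < T := hNpos k
        set n' : ℕ := n - T - g with hn'def
        have hsplit : n = T + g + n' := by
          have : T + g + 1 ≤ n := hPk
          omega
        have h1n' : 1 ≤ n' := by omega
        have hhalfN : n' + n' ≤ n := by omega
        have hn'lt : n' < n := by omega
        -- cost bound
        have hcT : c T n' ≤ K * (n:ℝ) / lm ^ ((1:ℝ)+ε) := by
          have h1 := hc T n' hTpos (by omega)
          have hTn' : (T:ℝ) + n' = (n:ℝ) - g := by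
            have : (n:ℝ) = (T:ℝ) + g + n' := by exact_mod_cast congrArg (Nat.cast : ℕ → ℝ) hsplit
            linarith
          have hmn : (m:ℝ) + 1 ≤ (n:ℝ) - g := by
            have : (m:ℕ) + g + 1 ≤ n := hn
            have hcast : (m:ℝ) + g + 1 ≤ (n:ℝ) := by exact_mod_cast this
            linarith
          have hlogge : lm ≤ Real.log ((T:ℝ) + n') := by
            rw [hTn', hlmdef]
            exact Real.log_le_log hm0R (by linarith)
          have hd2 : (0:ℝ) < Real.log ((T:ℝ) + n') ^ ((1:ℝ)+ε) :=
            Real.rpow_pos_of_pos (by linarith) _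
          calc c T n' ≤ K * ((T:ℝ) + n') / Real.log ((T:ℝ) + n') ^ ((1:ℝ)+ε) := h1
            _ ≤ K * (n:ℝ) / lm ^ ((1:ℝ)+ε) := by
                apply div_le_div₀ (by positivity) ?_ hlmp
                · exact Real.rpow_le_rpow (by linarith) hlogge (by linarith)
                · rw [hTn']
                  have hg0 : (0:ℝ) ≤ g := by positivity
                  nlinarith [hK.le]
        have hstep := hsub T n' hTpos (by omega)
        rw [← hsplit] at hstep
        have hIH := IH n' hn'lt h1n'
        have hfT := hvk k
        rw [← hTdef] at hfT
        -- real arithmetic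
        have hTn' : (T:ℝ) + n' = (n:ℝ) - g := by
          have : (n:ℝ) = (T:ℝ) + g + n' := by exact_mod_cast congrArg (Nat.cast : ℕ → ℝ) hsplit
          linarith
        have hmnR : (m:ℝ) ≤ n := by
          have : m ≤ n := by omega
          exact_mod_cast this
        have hg0 : (0:ℝ) ≤ g := by positivity
        have hvT : v * T + v * n' = v * ((n:ℝ) - g) := by rw [← hTn']; ring
        have hvg : v * ((n:ℝ) - g) ≤ v * n + g * |v| := by
          have h4 : -v * (g:ℝ) ≤ |v| * g :=
            mul_le_mul_of_nonneg_right (neg_le_abs v) hg0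
          nlinarith
        have hW2 : 2 * W * (n':ℝ) ≤ W * n := by
          have hcast : (n':ℝ) + n' ≤ n := by exact_mod_cast hhalfN
          nlinarith [mul_nonneg hW0 (by linarith : (0:ℝ) ≤ (n:ℝ) - 2 * n')]
        have hW1 : 2 * ((g:ℝ) * |v|) + K * (n:ℝ) / lm ^ ((1:ℝ)+ε) ≤ W * n := by
          rw [hWeq]
          have h5 : 2 * ((g:ℝ) * |v|) ≤ 2 * (g:ℝ) * |v| / m * n := by
            rw [div_mul_eq_mul_div, le_div_iff₀ hm0R]
            have : (0:ℝ) ≤ 2 * (g:ℝ) * |v| := by positivity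
            nlinarith
          have h6 : K * (n:ℝ) / lm ^ ((1:ℝ)+ε) = K / lm ^ ((1:ℝ)+ε) * n := by ring
          have h7 : (2 * (g:ℝ) * |v| / m + K / lm ^ (1+ε)) * n
              = 2 * (g:ℝ) * |v| / m * n + K / lm ^ ((1:ℝ)+ε) * n := by ring
          rw [h7]
          linarith
        linarith
  intro n hn1
  have := hmain n hn1
  linarith [this]

set_option maxHeartbeats 2000000 in
lemma key_eventually (f : ℕ → ℝ) (c : ℕ → ℕ → ℝ) (g : ℕ) (K ε : ℝ)
    (hK : 0 < K) (hε : 0 < ε)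
    (hsub : ∀ i j : ℕ, 0 < i → 0 < j → f (i + g + j) ≤ c i j + f i + f j)
    (hc : ∀ i j : ℕ, 0 < i → 0 < j →
      c i j ≤ K * ((i : ℝ) + j) / Real.log ((i : ℝ) + j) ^ ((1 : ℝ) + ε))
    (t η : ℝ) (hη : 0 < η)
    (hfreq : ∀ M : ℕ, ∃ m : ℕ, M ≤ m ∧ 3 ≤ m ∧ f m ≤ t * m) :
    ∀ᶠ n : ℕ in atTop, f n ≤ (t + η) * n := by
  set L2 : ℝ := Real.log 2 with hL2def
  have hL2 : 0 < L2 := Real.log_pos one_lt_two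
  set V0 : ℝ := |t| + K / (ε * L2) with hV0def
  set err : ℕ → ℝ := fun m => |t| * (g:ℝ) / m + K / (ε * L2 * Real.log m ^ ε)
      + 2 * (2 * (g:ℝ) * V0 / m + K / Real.log m ^ (1 + ε)) with herrdef
  -- err tends to 0
  have hnat : Tendsto (fun m : ℕ => (m:ℝ)) atTop atTop := tendsto_natCast_atTop_atTop
  have hlogt : Tendsto (fun m : ℕ => Real.log m) atTop atTop :=
    Real.tendsto_log_atTop.comp hnat
  have h1 : Tendsto (fun m : ℕ => |t| * (g:ℝ) / m) atTop (nhds 0) :=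
    Tendsto.div_atTop tendsto_const_nhds hnat
  have h2 : Tendsto (fun m : ℕ => K / (ε * L2 * Real.log m ^ ε)) atTop (nhds 0) := by
    apply Tendsto.div_atTop tendsto_const_nhds
    apply Tendsto.const_mul_atTop (by positivity : (0:ℝ) < ε * L2)
    exact (tendsto_rpow_atTop hε).comp hlogt
  have h3 : Tendsto (fun m : ℕ => 2 * (g:ℝ) * V0 / m) atTop (nhds 0) :=
    Tendsto.div_atTop tendsto_const_nhds hnat
  have h4 : Tendsto (fun m : ℕ => K / Real.log m ^ (1 + ε)) atTop (nhds 0) := by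
    apply Tendsto.div_atTop tendsto_const_nhds
    exact (tendsto_rpow_atTop (by linarith : (0:ℝ) < 1 + ε)).comp hlogt
  have htend : Tendsto err atTop (nhds 0) := by
    have := (h1.add h2).add ((h3.add h4).const_mul 2)
    simpa [herrdef] using this
  have hev : ∀ᶠ m : ℕ in atTop, err m < η / 2 :=
    htend.eventually_lt_const (by linarith)
  obtain ⟨M0, hM0⟩ := eventually_atTop.1 hev
  obtain ⟨m, hmM, hm3, hfm⟩ := hfreq M0
  have herrm : err m < η / 2 := hM0 m hmM
  obtain ⟨B, hB⟩ := key_fixed_m f c g K ε hK hε hsub hc t m hm3 hfm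
  -- bound v + 2W ≤ t + err m
  have hm0R : (0:ℝ) < m := by exact_mod_cast (by omega : 0 < m)
  have hmgR : (0:ℝ) < (m:ℝ) + g := by positivity
  have hlm1 : 1 ≤ Real.log m := log_ge_one hm3
  have hlm0 : 0 < Real.log m := by linarith
  set lm : ℝ := Real.log m with hlmdef
  have hlme : (0:ℝ) < lm ^ ε := Real.rpow_pos_of_pos hlm0 ε
  have hlme1 : (1:ℝ) ≤ lm ^ ε := by
    calc (1:ℝ) = (1:ℝ) ^ ε := (Real.one_rpow ε).symm
      _ ≤ lm ^ ε := Real.rpow_le_rpow (by norm_num) hlm1 hε.le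
  have hE0nn : 0 ≤ E0 K ε m g := by
    simp only [E0, ← hL2def, ← hlmdef]
    positivity
  have hE0div : E0 K ε m g / ((m:ℝ) + g) = K / (ε * L2 * lm ^ ε) := by
    simp only [E0, ← hL2def, ← hlmdef]
    field_simp
  have hg0 : (0:ℝ) ≤ g := by positivity
  have hg0' : (0:ℝ) ≤ g := by positivity
  have hv_le : vV t K ε m g ≤ t + (|t| * (g:ℝ) / m + K / (ε * L2 * lm ^ ε)) := by
    simp only [vV]
    rw [div_le_iff₀ hmgR]
    have habs : -t * (g:ℝ) ≤ |t| * g := mul_le_mul_of_nonneg_right (neg_le_abs t) hg0'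
    have hd1 : E0 K ε m g = K / (ε * L2 * lm ^ ε) * ((m:ℝ) + g) := by
      rw [← hE0div]; field_simp
    have hd2 : |t| * (g:ℝ) ≤ |t| * (g:ℝ) / m * ((m:ℝ) + g) := by
      rw [div_mul_eq_mul_div, le_div_iff₀ hm0R]
      have h0 : (0:ℝ) ≤ |t| * g := by positivity
      nlinarith
    have hKpos : (0:ℝ) ≤ K / (ε * L2 * lm ^ ε) := by positivity
    nlinarith [hd1]
  have habsv : |vV t K ε m g| ≤ V0 := by
    have h1 : |vV t K ε m g| = |t * m + E0 K ε m g| / ((m:ℝ) + g) := by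
      simp only [vV, abs_div, abs_of_pos hmgR]
    have h2 : |t * (m:ℝ) + E0 K ε m g| ≤ |t| * m + E0 K ε m g := by
      calc |t * (m:ℝ) + E0 K ε m g| ≤ |t * (m:ℝ)| + |E0 K ε m g| := abs_add_le _ _
        _ = |t| * m + E0 K ε m g := by
            rw [abs_mul, abs_of_nonneg (by positivity : (0:ℝ) ≤ (m:ℝ)),
              abs_of_nonneg hE0nn]
    have h3 : (|t| * m + E0 K ε m g) / ((m:ℝ) + g) ≤ |t| + K / (ε * L2 * lm ^ ε) := by
      rw [div_le_iff₀ hmgR]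
      have hd1 : E0 K ε m g = K / (ε * L2 * lm ^ ε) * ((m:ℝ) + g) := by
        rw [← hE0div]; field_simp
      nlinarith [abs_nonneg t, hd1]
    have h4 : K / (ε * L2 * lm ^ ε) ≤ K / (ε * L2) := by
      apply div_le_div_of_nonneg_left hK.le (by positivity)
      nlinarith [mul_pos hε hL2]
    calc |vV t K ε m g| = |t * (m:ℝ) + E0 K ε m g| / ((m:ℝ) + g) := h1
      _ ≤ (|t| * m + E0 K ε m g) / ((m:ℝ) + g) := by
          apply div_le_div_of_nonneg_right h2 hmgR.le
      _ ≤ |t| + K / (ε * L2 * lm ^ ε) := h3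
      _ ≤ V0 := by rw [hV0def]; linarith
  have hW_le : wW t K ε m g ≤ 2 * (g:ℝ) * V0 / m + K / lm ^ (1 + ε) := by
    simp only [wW, ← hlmdef]
    have : 2 * (g:ℝ) * |vV t K ε m g| / m ≤ 2 * (g:ℝ) * V0 / m := by
      apply div_le_div_of_nonneg_right ?_ hm0R.le
      nlinarith [habsv, hg0]
    linarith
  have hvw : vV t K ε m g + 2 * wW t K ε m g ≤ t + η / 2 := by
    have : vV t K ε m g + 2 * wW t K ε m g ≤ t + err m := by
      simp only [herrdef, ← hlmdef]
      linarith
    linarith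
  obtain ⟨N0, hN0⟩ := exists_nat_ge (2 * B / η)
  filter_upwards [eventually_ge_atTop (max N0 1)] with n hn
  have hn1 : 1 ≤ n := le_trans (le_max_right N0 1) hn
  have hnN0 : (N0:ℝ) ≤ n := by exact_mod_cast le_trans (le_max_left N0 1) hn
  have hBn : B ≤ η / 2 * n := by
    have h1 : 2 * B / η ≤ (n:ℝ) := le_trans hN0 hnN0
    rw [div_le_iff₀ hη] at h1
    linarith
  have hnn : (0:ℝ) ≤ n := by positivity
  calc f n ≤ (vV t K ε m g + 2 * wW t K ε m g) * n + B := hB n hn1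
    _ ≤ (t + η / 2) * n + η / 2 * n := by
        have := mul_le_mul_of_nonneg_right hvw hnn
        linarith
    _ = (t + η) * n := by ring


theorem gapped_subadditive_limit (f : ℕ → ℝ) (c : ℕ → ℕ → ℝ) (g : ℕ) (K ε : ℝ)
    (hK : 0 < K) (hε : 0 < ε)
    (hsub : ∀ i j : ℕ, 0 < i → 0 < j → f (i + g + j) ≤ c i j + f i + f j)
    (hc : ∀ i j : ℕ, 0 < i → 0 < j →
      c i j ≤ K * ((i : ℝ) + j) / Real.log ((i : ℝ) + j) ^ ((1 : ℝ) + ε)) :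
    liminf (fun n : ℕ => ((f n / n : ℝ) : EReal)) atTop =
      limsup (fun n : ℕ => ((f n / n : ℝ) : EReal)) atTop := by
  refine le_antisymm liminf_le_limsup ?_
  by_contra hle
  rw [not_le] at hle
  obtain ⟨q, hq1, hq2⟩ := EReal.exists_rat_btwn_of_lt hle
  set t : ℝ := (q : ℝ) with htdef
  have hfreq : ∀ M : ℕ, ∃ m : ℕ, M ≤ m ∧ 3 ≤ m ∧ f m ≤ t * m := by
    intro M
    have hfr : ∃ᶠ n in atTop, ((f n / n : ℝ) : EReal) < ((t : ℝ) : EReal) :=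
      frequently_lt_of_liminf_lt (by isBoundedDefault) hq1
    obtain ⟨n, hlt', hge⟩ := (hfr.and_eventually (eventually_ge_atTop (max M 3))).exists
    refine ⟨n, le_trans (le_max_left _ _) hge, le_trans (le_max_right _ _) hge, ?_⟩
    have hn0 : (0:ℝ) < n := by
      have : 3 ≤ n := le_trans (le_max_right _ _) hge
      exact_mod_cast (by omega : 0 < n)
    have hdiv : f n / n < t := by exact_mod_cast hlt'
    rw [div_lt_iff₀ hn0] at hdiv
    linarith
  have hls : ∀ η : ℝ, 0 < η →
      limsup (fun n : ℕ => ((f n / n : ℝ) : EReal)) atTop ≤ ((t + η : ℝ) : EReal) := by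
    intro η hη
    have hev := key_eventually f c g K ε hK hε hsub hc t η hη hfreq
    refine limsup_le_of_le (by isBoundedDefault) ?_
    filter_upwards [hev, eventually_ge_atTop 1] with n hn hn1
    have hn0 : (0:ℝ) < n := by exact_mod_cast (by omega : 0 < n)
    have hdiv : f n / n ≤ t + η := by
      rw [div_le_iff₀ hn0]; linarith
    exact_mod_cast hdiv
  obtain ⟨s, hs1, hs2⟩ := EReal.exists_rat_btwn_of_lt hq2
  have hst : t < (s:ℝ) := by exact_mod_cast hs1
  have hfin := hls ((s:ℝ) - t) (by linarith)
  rw [show (t + ((s:ℝ) - t)) = (s:ℝ) by ring] at hfin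
  exact absurd hs2 (not_lt.2 hfin)
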